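/- Assume Hypothesis (⋆). Let p be a prime, (x,y) an arc, E_x = ⟨O_p(G_{x,z}) : z ∈ Δ(x)⟩ and E_y = ⟨O_p(G_{z,y}) : z ∈ Δ(y)⟩. If E_x ≤ G_x^{[1]} and E_y ≤ G_y^{[1]}, then O_p(G_{x,y}) = 1. -/

import Mathlib

open Equiv Subgroup

/-- `N` (a subgroup of `Perm V`) acts transitively on the neighbourhood of `x`. -/
def transOn {V : Type*} (Δ : SimpleGraph V) (N : Subgroup (Equiv.Perm V)) (x : V) : Prop :=
  ∀ u ∈ Δ.neighborSet x, ∀ v ∈ Δ.neighborSet x, ∃ g ∈ N, g u = v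

/-- The permutation group induced by `N` on the neighbourhood of `x` is semiregular. -/
def semiregOn {V : Type*} (Δ : SimpleGraph V) (N : Subgroup (Equiv.Perm V)) (x : V) : Prop :=
  ∀ g ∈ N, (∃ u ∈ Δ.neighborSet x, g u = u) → ∀ v ∈ Δ.neighborSet x, g v = v

/-- The stabiliser `G_x`. -/
def vstab {V : Type*} (G : Subgroup (Equiv.Perm V)) (x : V) : Subgroup (Equiv.Perm V) :=
  G ⊓ MulAction.stabilizer (Equiv.Perm V) x

/-- `G_x^{[i]}`: pointwise stabiliser of the ball of radius `i` around `x`. -/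
def ball {V : Type*} (Δ : SimpleGraph V) (G : Subgroup (Equiv.Perm V)) (x : V) (i : ℕ) :
    Subgroup (Equiv.Perm V) :=
  G ⊓ ⨅ z ∈ {z : V | Δ.dist x z ≤ i}, MulAction.stabilizer (Equiv.Perm V) z

/-- `K` is a normal subgroup of `H` (both subgroups of `Perm V`). -/
def normalIn {V : Type*} (K H : Subgroup (Equiv.Perm V)) : Prop :=
  K ≤ H ∧ ∀ h ∈ H, ∀ k ∈ K, h * k * h⁻¹ ∈ K

/-- `O_p(H)`: the largest normal `p`-subgroup of `H`. -/
def Op {V : Type*} (p : ℕ) (H : Subgroup (Equiv.Perm V)) : Subgroup (Equiv.Perm V) :=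
  sSup {K | normalIn K H ∧ IsPGroup p K}

/-- `E_x = ⟨O_p(G_{x,z}) : z ∈ Δ(x)⟩`. -/
def Ep {V : Type*} (Δ : SimpleGraph V) (G : Subgroup (Equiv.Perm V)) (p : ℕ) (x : V) :
    Subgroup (Equiv.Perm V) :=
  ⨆ z ∈ Δ.neighborSet x, Op p (vstab G x ⊓ vstab G z)

/-- `C_{G_x}(G_x^{[1]})`. -/
def locCent {V : Type*} (Δ : SimpleGraph V) (G : Subgroup (Equiv.Perm V)) (x : V) :
    Subgroup (Equiv.Perm V) :=
  vstab G x ⊓ Subgroup.centralizer ((ball Δ G x 1 : Subgroup (Equiv.Perm V)) : Set (Equiv.Perm V))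

/-- Hypothesis (⋆). -/
def StarHyp {V : Type*} (Δ : SimpleGraph V) (G : Subgroup (Equiv.Perm V)) : Prop :=
  ∀ x : V,
    transOn Δ (vstab G x) x ∧
    (transOn Δ (locCent Δ G x) x ∨ semiregOn Δ (locCent Δ G x) x) ∧
    ∀ p : ℕ, p.Prime → (transOn Δ (Ep Δ G p x) x ∨ semiregOn Δ (Ep Δ G p x) x)

/-- `G` is a group of automorphisms of `Δ`. -/
def isAut {V : Type*} (Δ : SimpleGraph V) (G : Subgroup (Equiv.Perm V)) : Prop :=
  ∀ g ∈ G, ∀ u v : V, Δ.Adj (g u) (g v) ↔ Δ.Adj u v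

/-- `K` is a subnormal subgroup of `H`. -/
def subnormalIn {V : Type*} (K H : Subgroup (Equiv.Perm V)) : Prop :=
  ∃ (n : ℕ) (c : ℕ → Subgroup (Equiv.Perm V)),
    c 0 = K ∧ c n = H ∧ ∀ i < n, normalIn (c i) (c (i + 1))

/-- `K` is quasisimple: perfect and simple modulo its centre. -/
def IsQuasisimple {V : Type*} (K : Subgroup (Equiv.Perm V)) : Prop :=
  commutator ↥K = ⊤ ∧ IsSimpleGroup (↥K ⧸ Subgroup.center ↥K)

/-- `E(H)`: the layer, generated by the components of `H`. -/
def layer {V : Type*} (H : Subgroup (Equiv.Perm V)) : Subgroup (Equiv.Perm V) :=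
  sSup {K | subnormalIn K H ∧ IsQuasisimple K}

/-- `F(H)`: the Fitting subgroup of `H`. -/
def fitting {V : Type*} (H : Subgroup (Equiv.Perm V)) : Subgroup (Equiv.Perm V) :=
  sSup {K | normalIn K H ∧ Group.IsNilpotent ↥K}

/-- `F*(H) = E(H)F(H)`: the generalised Fitting subgroup of `H`. -/
def genFitting {V : Type*} (H : Subgroup (Equiv.Perm V)) : Subgroup (Equiv.Perm V) :=
  layer H ⊔ fitting H

section AuxStmt7

set_option linter.unusedSectionVars false

variable {V : Type*} [Fintype V]

/-- Conjugation of a subgroup of `Perm V`. -/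
private def cm (g : Equiv.Perm V) (H : Subgroup (Equiv.Perm V)) : Subgroup (Equiv.Perm V) :=
  H.map (MulAut.conj g).toMonoidHom

private lemma mem_cm {g k : Equiv.Perm V} {H : Subgroup (Equiv.Perm V)} :
    k ∈ cm g H ↔ ∃ h ∈ H, g * h * g⁻¹ = k := by
  simp [cm, Subgroup.mem_map, MulAut.conj_apply]

private lemma cm_le_iff {g : Equiv.Perm V} {K L : Subgroup (Equiv.Perm V)} :
    cm g K ≤ L ↔ ∀ k ∈ K, g * k * g⁻¹ ∈ L := by
  constructor
  · intro h k hk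
    exact h (mem_cm.mpr ⟨k, hk, rfl⟩)
  · intro h k' hk'
    obtain ⟨k, hk, rfl⟩ := mem_cm.mp hk'
    exact h k hk

private lemma cm_cm (g₁ g₂ : Equiv.Perm V) (H : Subgroup (Equiv.Perm V)) :
    cm g₁ (cm g₂ H) = cm (g₁ * g₂) H := by
  have hcomp : (MulAut.conj g₁).toMonoidHom.comp (MulAut.conj g₂).toMonoidHom
      = (MulAut.conj (g₁ * g₂)).toMonoidHom := by
    ext k
    simp [MulAut.conj_apply, mul_assoc]
  unfold cm
  rw [Subgroup.map_map, hcomp]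

private lemma cm_one (H : Subgroup (Equiv.Perm V)) : cm 1 H = H := by
  ext k
  simp [mem_cm]

private lemma cm_inv_cm (g : Equiv.Perm V) (H : Subgroup (Equiv.Perm V)) :
    cm g (cm g⁻¹ H) = H := by
  rw [cm_cm, mul_inv_cancel, cm_one]

private lemma cm_cm_inv (g : Equiv.Perm V) (H : Subgroup (Equiv.Perm V)) :
    cm g⁻¹ (cm g H) = H := by
  rw [cm_cm, inv_mul_cancel, cm_one]

private lemma normalIn_bot (H : Subgroup (Equiv.Perm V)) : normalIn ⊥ H := by
  refine ⟨bot_le, fun h _ k hk => ?_⟩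
  simp only [Subgroup.mem_bot] at hk ⊢
  simp [hk]

private lemma normalIn_cm {g : Equiv.Perm V} {K H : Subgroup (Equiv.Perm V)}
    (hKH : normalIn K H) : normalIn (cm g K) (cm g H) := by
  refine ⟨Subgroup.map_mono hKH.1, ?_⟩
  intro h' hh' k' hk'
  obtain ⟨h, hh, rfl⟩ := mem_cm.mp hh'
  obtain ⟨k, hk, rfl⟩ := mem_cm.mp hk'
  refine mem_cm.mpr ⟨h * k * h⁻¹, hKH.2 h hh k hk, ?_⟩
  group

private lemma normalIn_sup {K L H : Subgroup (Equiv.Perm V)}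
    (hK : normalIn K H) (hL : normalIn L H) : normalIn (K ⊔ L) H := by
  refine ⟨sup_le hK.1 hL.1, fun h hh => ?_⟩
  have hmap : cm h (K ⊔ L) ≤ K ⊔ L := by
    unfold cm
    rw [Subgroup.map_sup]
    exact sup_le ((cm_le_iff.mpr fun k hk => hK.2 h hh k hk).trans le_sup_left)
      ((cm_le_iff.mpr fun k hk => hL.2 h hh k hk).trans le_sup_right)
  intro k hk
  exact hmap (mem_cm.mpr ⟨k, hk, rfl⟩)

private lemma isPGroup_sup {p : ℕ} {K L H : Subgroup (Equiv.Perm V)}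
    (hKH : normalIn K H) (hLH : normalIn L H)
    (hK : IsPGroup p K) (hL : IsPGroup p L) : IsPGroup p (K ⊔ L : Subgroup (Equiv.Perm V)) := by
  refine IsPGroup.to_sup_of_normal_right' hK hL ?_
  intro k hk
  rw [Subgroup.mem_normalizer_iff]
  intro l
  constructor
  · intro hl
    exact hLH.2 k (hKH.1 hk) l hl
  · intro hl
    have h1 := hLH.2 k⁻¹ (H.inv_mem (hKH.1 hk)) _ hl
    have h2 : k⁻¹ * (k * l * k⁻¹) * k⁻¹⁻¹ = l := by group
    rwa [h2] at h1

private lemma Op_spec (p : ℕ) (H : Subgroup (Equiv.Perm V)) :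
    normalIn (Op p H) H ∧ IsPGroup p (Op p H) := by
  classical
  haveI : Finite (Subgroup (Equiv.Perm V)) :=
    Finite.of_injective (fun K : Subgroup (Equiv.Perm V) => (K : Set (Equiv.Perm V)))
      SetLike.coe_injective
  have hfin : {K : Subgroup (Equiv.Perm V) | normalIn K H ∧ IsPGroup p K}.Finite :=
    Set.toFinite _
  have hOp : Op p H = hfin.toFinset.sup id := by
    rw [Finset.sup_id_eq_sSup, Set.Finite.coe_toFinset, Op]
  rw [hOp]
  refine Finset.sup_induction (p := fun K => normalIn K H ∧ IsPGroup p K)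
    ⟨normalIn_bot H, IsPGroup.of_bot⟩
    (fun a ha b hb => ⟨normalIn_sup ha.1 hb.1, isPGroup_sup ha.1 hb.1 ha.2 hb.2⟩) ?_
  intro K hK
  simpa using hfin.mem_toFinset.mp hK

private lemma Op_le (p : ℕ) (H : Subgroup (Equiv.Perm V)) : Op p H ≤ H :=
  sSup_le fun _ hK => hK.1.1

private lemma le_Op {p : ℕ} {K H : Subgroup (Equiv.Perm V)}
    (h1 : normalIn K H) (h2 : IsPGroup p K) : K ≤ Op p H :=
  le_sSup ⟨h1, h2⟩

private lemma cm_Op (g : Equiv.Perm V) (p : ℕ) (H : Subgroup (Equiv.Perm V)) :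
    cm g (Op p H) = Op p (cm g H) := by
  have key : ∀ (g : Equiv.Perm V) (H : Subgroup (Equiv.Perm V)),
      cm g (Op p H) ≤ Op p (cm g H) := by
    intro g H
    unfold cm
    rw [Subgroup.map_le_iff_le_comap, Op]
    refine sSup_le fun K hK => ?_
    rw [← Subgroup.map_le_iff_le_comap]
    exact le_Op (normalIn_cm hK.1) (hK.2.map _)
  refine le_antisymm (key g H) ?_
  have h1 := key g⁻¹ (cm g H)
  rw [cm_cm_inv] at h1
  calc Op p (cm g H) = cm g (cm g⁻¹ (Op p (cm g H))) := (cm_inv_cm _ _).symm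
    _ ≤ cm g (Op p H) := Subgroup.map_mono h1

private lemma mem_vstab {k : Equiv.Perm V} {G : Subgroup (Equiv.Perm V)} {x : V} :
    k ∈ vstab G x ↔ k ∈ G ∧ k x = x := by
  simp [vstab, Subgroup.mem_inf, MulAction.mem_stabilizer_iff, Equiv.Perm.smul_def]

private lemma vstab_le {G : Subgroup (Equiv.Perm V)} {x : V} : vstab G x ≤ G :=
  inf_le_left

section Graph

variable {Δ : SimpleGraph V} {G : Subgroup (Equiv.Perm V)}

private lemma dist_le_one_iff (hconn : Δ.Connected) {u v : V} :
    Δ.dist u v ≤ 1 ↔ u = v ∨ Δ.Adj u v := by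
  rw [Nat.le_one_iff_eq_zero_or_eq_one, hconn.dist_eq_zero_iff,
    SimpleGraph.dist_eq_one_iff_adj]

private lemma mem_ball_iff (hconn : Δ.Connected) {k : Equiv.Perm V} {x : V} :
    k ∈ ball Δ G x 1 ↔ k ∈ G ∧ k x = x ∧ ∀ z, Δ.Adj x z → k z = z := by
  simp only [ball, Subgroup.mem_inf, Subgroup.mem_iInf, MulAction.mem_stabilizer_iff,
    Set.mem_setOf_eq, Equiv.Perm.smul_def]
  constructor
  · rintro ⟨hkG, hfix⟩
    refine ⟨hkG, hfix x (by rw [SimpleGraph.dist_self]; omega), fun z hz => hfix z ?_⟩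
    exact (dist_le_one_iff hconn).mpr (Or.inr hz)
  · rintro ⟨hkG, hx, hadj⟩
    refine ⟨hkG, fun z hz => ?_⟩
    rcases (dist_le_one_iff hconn).mp hz with rfl | h
    · exact hx
    · exact hadj z h

private lemma ball_le_vstab (hconn : Δ.Connected) {x : V} : ball Δ G x 1 ≤ vstab G x := by
  intro k hk
  obtain ⟨h1, h2, _⟩ := (mem_ball_iff hconn).mp hk
  exact mem_vstab.mpr ⟨h1, h2⟩

private lemma ball_le_vstab_adj (hconn : Δ.Connected) {x z : V} (h : Δ.Adj x z) :
    ball Δ G x 1 ≤ vstab G z := by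
  intro k hk
  obtain ⟨h1, _, h3⟩ := (mem_ball_iff hconn).mp hk
  exact mem_vstab.mpr ⟨h1, h3 z h⟩

private lemma cm_ball (hconn : Δ.Connected) (hG : isAut Δ G) {g : Equiv.Perm V}
    (hg : g ∈ G) (x : V) : cm g (ball Δ G x 1) = ball Δ G (g x) 1 := by
  have key : ∀ g ∈ G, ∀ x : V, cm g (ball Δ G x 1) ≤ ball Δ G (g x) 1 := by
    intro g hg x
    rw [cm_le_iff]
    intro k hk
    rw [mem_ball_iff hconn] at hk ⊢
    obtain ⟨hkG, hkx, hkadj⟩ := hk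
    refine ⟨G.mul_mem (G.mul_mem hg hkG) (G.inv_mem hg), ?_, ?_⟩
    · show (g * k * g⁻¹) (g x) = g x
      simp [Equiv.Perm.mul_apply, hkx]
    · intro z hz
      have hz' : Δ.Adj x (g⁻¹ z) := by
        have h2 := hG g hg x (g⁻¹ z)
        rw [← h2]
        simpa using hz
      show (g * k * g⁻¹) z = z
      rw [Equiv.Perm.mul_apply, Equiv.Perm.mul_apply, hkadj _ hz']
      simp
  refine le_antisymm (key g hg x) ?_
  have h2 := key g⁻¹ (G.inv_mem hg) (g x)
  rw [show (g⁻¹ : Equiv.Perm V) (g x) = x from by simp] at h2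
  calc ball Δ G (g x) 1 = cm g (cm g⁻¹ (ball Δ G (g x) 1)) := (cm_inv_cm _ _).symm
    _ ≤ cm g (ball Δ G x 1) := Subgroup.map_mono h2

private lemma cm_vstab {g : Equiv.Perm V} (hg : g ∈ G) (x : V) :
    cm g (vstab G x) = vstab G (g x) := by
  have key : ∀ g ∈ G, ∀ x : V, cm g (vstab G x) ≤ vstab G (g x) := by
    intro g hg x
    rw [cm_le_iff]
    intro k hk
    obtain ⟨hkG, hkx⟩ := mem_vstab.mp hk
    refine mem_vstab.mpr ⟨G.mul_mem (G.mul_mem hg hkG) (G.inv_mem hg), ?_⟩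
    show (g * k * g⁻¹) (g x) = g x
    simp [Equiv.Perm.mul_apply, hkx]
  refine le_antisymm (key g hg x) ?_
  have h2 := key g⁻¹ (G.inv_mem hg) (g x)
  rw [show (g⁻¹ : Equiv.Perm V) (g x) = x from by simp] at h2
  calc vstab G (g x) = cm g (cm g⁻¹ (vstab G (g x))) := (cm_inv_cm _ _).symm
    _ ≤ cm g (vstab G x) := Subgroup.map_mono h2

private lemma cm_Ep_le (hG : isAut Δ G) (p : ℕ) {g : Equiv.Perm V} (hg : g ∈ G) (x : V) :
    cm g (Ep Δ G p x) ≤ Ep Δ G p (g x) := by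
  unfold cm
  rw [Ep, Subgroup.map_le_iff_le_comap]
  refine iSup₂_le fun z hz => ?_
  rw [← Subgroup.map_le_iff_le_comap]
  have hinj : Function.Injective ⇑(MulAut.conj g).toMonoidHom := (MulAut.conj g).injective
  have h1 : cm g (Op p (vstab G x ⊓ vstab G z)) = Op p (vstab G (g x) ⊓ vstab G (g z)) := by
    rw [cm_Op]
    congr 1
    unfold cm
    rw [Subgroup.map_inf _ _ _ hinj]
    show cm g (vstab G x) ⊓ cm g (vstab G z) = _
    rw [cm_vstab hg, cm_vstab hg]
  show cm g (Op p (vstab G x ⊓ vstab G z)) ≤ Ep Δ G p (g x)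
  rw [h1, Ep]
  have hz' : g z ∈ Δ.neighborSet (g x) := by
    rw [SimpleGraph.mem_neighborSet]
    exact (hG g hg x z).mpr ((SimpleGraph.mem_neighborSet Δ x z).mp hz)
  exact le_iSup₂ (f := fun w (_ : w ∈ Δ.neighborSet (g x)) => Op p (vstab G (g x) ⊓ vstab G w))
    (g z) hz'

end Graph

end AuxStmt7

theorem stmt7 {V : Type*} [Fintype V] (Δ : SimpleGraph V) (G : Subgroup (Equiv.Perm V))
    (hconn : Δ.Connected) (hG : isAut Δ G) (hstar : StarHyp Δ G)
    (p : ℕ) (hp : p.Prime) {x y : V} (hxy : Δ.Adj x y)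
    (hEx : Ep Δ G p x ≤ ball Δ G x 1) (hEy : Ep Δ G p y ≤ ball Δ G y 1) :
    Op p (vstab G x ⊓ vstab G y) = ⊥ := by
  classical
  -- every vertex lies in the `G`-orbit of `x` or of `y`
  have orbit2 : ∀ w : V, ∃ g ∈ G, g x = w ∨ g y = w := by
    have key : ∀ u w : V, Δ.Walk u w → (∃ g ∈ G, g x = u ∨ g y = u) →
        ∃ g ∈ G, g x = w ∨ g y = w := by
      intro u w wk
      induction wk with
      | nil => exact id
      | @cons u b w h q ih =>
        intro hu
        refine ih ?_
        obtain ⟨g, hg, hgu⟩ := hu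
        rcases hgu with hgu | hgu
        · have hb : Δ.Adj x (g⁻¹ b) := by
            have h2 := hG g hg x (g⁻¹ b)
            rw [← h2, hgu]
            simpa using h
          obtain ⟨h', hh', hy'⟩ := (hstar x).1 y ((SimpleGraph.mem_neighborSet _ _ _).mpr hxy)
            (g⁻¹ b) ((SimpleGraph.mem_neighborSet _ _ _).mpr hb)
          refine ⟨g * h', G.mul_mem hg (vstab_le hh'), Or.inr ?_⟩
          show g (h' y) = b
          rw [hy']
          simp
        · have hb : Δ.Adj y (g⁻¹ b) := by
            have h2 := hG g hg y (g⁻¹ b)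
            rw [← h2, hgu]
            simpa using h
          obtain ⟨h', hh', hx'⟩ := (hstar y).1 x ((SimpleGraph.mem_neighborSet _ _ _).mpr hxy.symm)
            (g⁻¹ b) ((SimpleGraph.mem_neighborSet _ _ _).mpr hb)
          refine ⟨g * h', G.mul_mem hg (vstab_le hh'), Or.inl ?_⟩
          show g (h' x) = b
          rw [hx']
          simp
    intro w
    obtain ⟨wk⟩ := hconn.preconnected x w
    exact key x w wk ⟨1, G.one_mem, Or.inl rfl⟩
  -- transfer of the hypothesis to every vertex
  have EpLeBall : ∀ w : V, Ep Δ G p w ≤ ball Δ G w 1 := by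
    have gen : ∀ g ∈ G, ∀ v : V, Ep Δ G p v ≤ ball Δ G v 1 →
        Ep Δ G p (g v) ≤ ball Δ G (g v) 1 := by
      intro g hg v hv
      have h1 : cm g⁻¹ (Ep Δ G p (g v)) ≤ Ep Δ G p v := by
        have h2 := cm_Ep_le hG p (G.inv_mem hg) (g v)
        rwa [show (g⁻¹ : Equiv.Perm V) (g v) = v from by simp] at h2
      calc Ep Δ G p (g v) = cm g (cm g⁻¹ (Ep Δ G p (g v))) := (cm_inv_cm _ _).symm
        _ ≤ cm g (ball Δ G v 1) := Subgroup.map_mono (h1.trans hv)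
        _ = ball Δ G (g v) 1 := cm_ball hconn hG hg v
    intro w
    obtain ⟨g, hg, hgw | hgw⟩ := orbit2 w
    · rw [← hgw]; exact gen g hg x hEx
    · rw [← hgw]; exact gen g hg y hEy
  set Q := Op p (vstab G x ⊓ vstab G y) with hQdef
  -- base case: Q ≤ O_p(G_y^{[1]})
  have hQEy : Q ≤ Ep Δ G p y := by
    rw [hQdef, inf_comm, Ep]
    exact le_iSup₂ (f := fun w (_ : w ∈ Δ.neighborSet y) => Op p (vstab G y ⊓ vstab G w))
      x ((SimpleGraph.mem_neighborSet _ _ _).mpr hxy.symm)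
  have hQby : Q ≤ ball Δ G y 1 := hQEy.trans hEy
  have hballxy : ball Δ G y 1 ≤ vstab G x ⊓ vstab G y :=
    le_inf (ball_le_vstab_adj hconn hxy.symm) (ball_le_vstab hconn)
  have hQOpy : Q ≤ Op p (ball Δ G y 1) := by
    refine le_Op ⟨hQby, fun h hh k hk => ?_⟩ (Op_spec p _).2
    exact (Op_spec p _).1.2 h (hballxy hh) k hk
  -- step: moving from a vertex to an adjacent one
  have step : ∀ u w : V, Δ.Adj u w →
      Op p (ball Δ G u 1) ≤ Op p (ball Δ G w 1) := by
    intro u w huw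
    have hRp : IsPGroup p (Op p (ball Δ G u 1)) := (Op_spec p _).2
    have hRb : Op p (ball Δ G u 1) ≤ ball Δ G u 1 := Op_le p _
    have hRH : Op p (ball Δ G u 1) ≤ vstab G u ⊓ vstab G w :=
      hRb.trans (le_inf (ball_le_vstab hconn) (ball_le_vstab_adj hconn huw))
    have hRnorm : normalIn (Op p (ball Δ G u 1)) (vstab G u ⊓ vstab G w) := by
      refine ⟨hRH, fun h hh k hk => ?_⟩
      have hhu : h ∈ vstab G u := (inf_le_left : vstab G u ⊓ vstab G w ≤ vstab G u) hh
      have hhG : h ∈ G := vstab_le hhu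
      have hfix : h u = u := (mem_vstab.mp hhu).2
      have hcm : cm h (Op p (ball Δ G u 1)) = Op p (ball Δ G u 1) := by
        rw [cm_Op, cm_ball hconn hG hhG, hfix]
      rw [← hcm]
      exact mem_cm.mpr ⟨k, hk, rfl⟩
    have hRT : Op p (ball Δ G u 1) ≤ Op p (vstab G u ⊓ vstab G w) := le_Op hRnorm hRp
    have hTEw : Op p (vstab G u ⊓ vstab G w) ≤ Ep Δ G p w := by
      rw [inf_comm, Ep]
      exact le_iSup₂ (f := fun v (_ : v ∈ Δ.neighborSet w) => Op p (vstab G w ⊓ vstab G v))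
        u ((SimpleGraph.mem_neighborSet _ _ _).mpr huw.symm)
    have hTbw : Op p (vstab G u ⊓ vstab G w) ≤ ball Δ G w 1 := hTEw.trans (EpLeBall w)
    have hballuw : ball Δ G w 1 ≤ vstab G u ⊓ vstab G w :=
      le_inf (ball_le_vstab_adj hconn huw.symm) (ball_le_vstab hconn)
    have hTnorm : normalIn (Op p (vstab G u ⊓ vstab G w)) (ball Δ G w 1) :=
      ⟨hTbw, fun h hh k hk => (Op_spec p _).1.2 h (hballuw hh) k hk⟩
    exact hRT.trans (le_Op hTnorm (Op_spec p _).2)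
  -- propagation to every vertex
  have prop : ∀ w : V, Q ≤ Op p (ball Δ G w 1) := by
    have key : ∀ u w : V, Δ.Walk u w → Q ≤ Op p (ball Δ G u 1) →
        Q ≤ Op p (ball Δ G w 1) := by
      intro u w wk
      induction wk with
      | nil => exact id
      | @cons u b w h q ih => exact fun hu => ih (hu.trans (step u b h))
    intro w
    obtain ⟨wk⟩ := hconn.preconnected y w
    exact key y w wk hQOpy
  -- conclusion
  refine (Subgroup.eq_bot_iff_forall _).mpr fun k hk => ?_
  have hfix : ∀ w : V, k w = w := by
    intro w
    have hkb : k ∈ ball Δ G w 1 := Op_le p _ (prop w hk)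
    exact ((mem_ball_iff hconn).mp hkb).2.1
  exact Equiv.ext hfix
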